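/- Let 2≤m<n be integers, and let M be the commutative monoid with generators a,x and defining relations a = x+(m−1)a and a = x+(n−1)a. Then (n−m+1)a = a in M, and the Grothendieck group of M is cyclic of order n−m, generated by the image of a. -/

import Mathlib

noncomputable section

/-- The two generators `a` and `x` of the monoid `M = ⟨a,x | a = x+(m−1)a, a = x+(n−1)a⟩`. -/
inductive MGen
  | a : MGen
  | x : MGen

/-- The defining relations `a = x + (m−1)a` and `a = x + (n−1)a`, as relations on the
free commutative (additive) monoid on `{a, x}` (i.e. on multisets). -/
def MRel (m n : ℕ) : Multiset MGen → Multiset MGen → Prop := fun s t =>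
  (s = {MGen.a} ∧ t = {MGen.x} + (m - 1) • ({MGen.a} : Multiset MGen)) ∨
  (s = {MGen.a} ∧ t = {MGen.x} + (n - 1) • ({MGen.a} : Multiset MGen))

/-- The commutative monoid `M = ⟨a,x | a = x+(m−1)a, a = x+(n−1)a⟩`. -/
def Mmn (m n : ℕ) : Type := (addConGen (MRel m n)).Quotient

instance (m n : ℕ) : AddCommMonoid (Mmn m n) := AddCon.addCommMonoid _

/-- The image of the generator `a` in `M`. -/
def aElt (m n : ℕ) : Mmn m n := AddCon.mk' _ ({MGen.a} : Multiset MGen)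

/-- weights of the generators in `ZMod (n-m)` -/
def wGen (m n : ℕ) : MGen → ZMod (n - m)
  | .a => 1
  | .x => 1 - ((m - 1 : ℕ) : ZMod (n - m))

/-- The hom from the free commutative monoid to `ZMod (n-m)`. -/
def fHom (m n : ℕ) : Multiset MGen →+ ZMod (n - m) where
  toFun s := (s.map (wGen m n)).sum
  map_zero' := rfl
  map_add' s t := by simp

lemma fHom_singleton (m n : ℕ) (y : MGen) : fHom m n {y} = wGen m n y := by
  show (Multiset.map (wGen m n) ({y} : Multiset MGen)).sum = wGen m n y
  simp

lemma fHom_rel (m n : ℕ) (hm : 2 ≤ m) (hmn : m < n) :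
    addConGen (MRel m n) ≤ AddCon.ker (fHom m n) := by
  apply AddCon.addConGen_le.mpr
  rintro s t (⟨rfl, rfl⟩ | ⟨rfl, rfl⟩)
  · show fHom m n _ = fHom m n _
    rw [map_add, map_nsmul, fHom_singleton, fHom_singleton]
    simp only [wGen, nsmul_eq_mul, mul_one]
    rw [sub_add_cancel]
  · show fHom m n _ = fHom m n _
    rw [map_add, map_nsmul, fHom_singleton, fHom_singleton]
    simp only [wGen, nsmul_eq_mul, mul_one]
    have h3 : (n - 1 : ℕ) = (m - 1) + (n - m) := by omega
    rw [h3]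
    push_cast
    rw [ZMod.natCast_self]
    ring

/-- Ext lemma for homs out of the free commutative monoid. -/
lemma multisetHom_ext {A : Type*} [AddCommMonoid A] (f g : Multiset MGen →+ A)
    (h : ∀ y, f {y} = g {y}) : f = g := by
  apply AddMonoidHom.ext
  intro s
  induction s using Multiset.induction with
  | empty => simp
  | cons y s ih =>
    rw [show y ::ₘ s = {y} + s from rfl, map_add, map_add, ih, h]

/-- **Statement 18.**  Let `2 ≤ m < n` and let `M = ⟨a,x | a = x+(m−1)a, a = x+(n−1)a⟩`.
Then `(n−m+1)a = a` in `M`, and the Grothendieck group of `M` (the universal abelian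
group receiving a monoid homomorphism from `M`) is cyclic of order `n−m`, generated by
the image of `a` (i.e. isomorphic to `ZMod (n−m)` with the image of `a` corresponding
to `1`). -/
theorem statement18 (m n : ℕ) (hm : 2 ≤ m) (hmn : m < n) :
    (n - m + 1) • aElt m n = aElt m n ∧
    ∃ (Γ : Type) (_ : AddCommGroup Γ) (φ : Mmn m n →+ Γ),
      (∀ (H : Type) (_ : AddCommGroup H) (ψ : Mmn m n →+ H),
        ∃! g : Γ →+ H, g.comp φ = ψ) ∧
      ∃ iso : Γ ≃+ ZMod (n - m), iso (φ (aElt m n)) = 1 := by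
  set c := addConGen (MRel m n) with hc
  have h1 : aElt m n = AddCon.mk' c ({MGen.x} + (m - 1) • ({MGen.a} : Multiset MGen)) :=
    (AddCon.eq c).2 (AddConGen.Rel.of _ _ (Or.inl ⟨rfl, rfl⟩))
  have h2 : aElt m n = AddCon.mk' c ({MGen.x} + (n - 1) • ({MGen.a} : Multiset MGen)) :=
    (AddCon.eq c).2 (AddConGen.Rel.of _ _ (Or.inr ⟨rfl, rfl⟩))
  set X : Mmn m n := AddCon.mk' c ({MGen.x} : Multiset MGen) with hX
  have hmk : ∀ k : ℕ, AddCon.mk' c ({MGen.x} + k • ({MGen.a} : Multiset MGen)) =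
      X + k • aElt m n := by
    intro k
    rw [map_add, map_nsmul]
    rfl
  rw [hmk] at h1 h2
  have key1 : aElt m n = X + (m - 1) • aElt m n := h1
  have key2 : aElt m n = X + (n - 1) • aElt m n := h2
  have hsplit : (n - 1 : ℕ) = (m - 1) + (n - m) := by omega
  have part1 : (n - m + 1) • aElt m n = aElt m n := by
    conv_rhs => rw [key2, hsplit, add_nsmul, ← add_assoc, ← key1]
    rw [add_comm, add_nsmul, one_nsmul]
  set φ : Mmn m n →+ ZMod (n - m) := c.lift (fHom m n) (fHom_rel m n hm hmn) with hφ
  have hlift : ∀ y : MGen, φ (AddCon.mk' c ({y} : Multiset MGen)) = wGen m n y := by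
    intro y
    have h := AddCon.lift_mk' (fHom_rel m n hm hmn) ({y} : Multiset MGen)
    rw [fHom_singleton] at h
    exact h
  have hφa : φ (aElt m n) = 1 := hlift MGen.a
  have hφx : φ X = 1 - ((m - 1 : ℕ) : ZMod (n - m)) := hlift MGen.x
  refine ⟨part1, ZMod (n - m), inferInstance, φ, ?_, ?_⟩
  · intro H _ ψ
    have k1 : ψ (aElt m n) = ψ X + (m - 1) • ψ (aElt m n) := by
      conv_lhs => rw [key1]
      rw [map_add, map_nsmul]
    have k2 : ψ (aElt m n) = ψ X + (n - 1) • ψ (aElt m n) := by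
      conv_lhs => rw [key2]
      rw [map_add, map_nsmul]
    have hdA : (n - m : ℕ) • ψ (aElt m n) = 0 := by
      have h' : (m - 1 : ℕ) • ψ (aElt m n) = (n - 1 : ℕ) • ψ (aElt m n) :=
        add_left_cancel (k1.symm.trans k2)
      rw [hsplit, add_nsmul] at h'
      exact (left_eq_add.mp h')
    have hdA' : (zmultiplesHom H (ψ (aElt m n))) ((n - m : ℕ) : ℤ) = 0 := by
      simpa [natCast_zsmul] using hdA
    set g : ZMod (n - m) →+ H := ZMod.lift (n - m) ⟨zmultiplesHom H (ψ (aElt m n)), hdA'⟩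
      with hg
    have hga : g 1 = ψ (aElt m n) := by
      have h1' : ((1 : ℤ) : ZMod (n - m)) = 1 := by push_cast; ring
      rw [← h1', hg, ZMod.lift_coe]
      simp
    have hgx : g (1 - ((m - 1 : ℕ) : ZMod (n - m))) = ψ X := by
      have hcast : (1 - ((m - 1 : ℕ) : ZMod (n - m))) =
          (((1 - (m - 1 : ℕ) : ℤ)) : ZMod (n - m)) := by push_cast; ring
      rw [hcast, hg, ZMod.lift_coe]
      simp only [zmultiplesHom_apply, sub_zsmul, one_zsmul, natCast_zsmul]
      rw [← sub_eq_add_neg, sub_eq_iff_eq_add]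
      exact k1
    refine ⟨g, ?_, ?_⟩
    · have hcomp : (g.comp φ).comp (AddCon.mk' c) = ψ.comp (AddCon.mk' c) := by
        apply multisetHom_ext
        intro y
        show g (φ (AddCon.mk' c {y})) = ψ (AddCon.mk' c {y})
        cases y
        · rw [show AddCon.mk' c ({MGen.a} : Multiset MGen) = aElt m n from rfl, hφa]
          exact hga
        · rw [show AddCon.mk' c ({MGen.x} : Multiset MGen) = X from rfl, hφx]
          exact hgx
      apply AddCon.lift_funext
      intro s
      exact DFunLike.congr_fun hcomp s
    · intro g' hg'
      have h1' : g' 1 = ψ (aElt m n) := by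
        have : g' (φ (aElt m n)) = ψ (aElt m n) := by rw [← hg']; rfl
        rwa [hφa] at this
      ext z
      obtain ⟨k, rfl⟩ := ZMod.intCast_surjective (n := n - m) z
      rw [show ((k : ℤ) : ZMod (n - m)) = k • (1 : ZMod (n - m)) by
        rw [zsmul_eq_mul, mul_one]]
      rw [map_zsmul, map_zsmul, h1', hga]
  · exact ⟨AddEquiv.refl _, by simp [hφa]⟩
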